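/- For i ∈ [n-k+1], the Euler derivative of the A-hypergeometric polynomial satisfies x_i · ∂Z_{n,k}/∂x_i = x_i · Z_{n-i,k-1}(x), i.e., θ_i Z_{n,k} = x_i Z_{n-i,k-1}. -/

import Mathlib

open Finset

lemma sum_castLE' {M : Type*} [AddCommMonoid M] {n m : ℕ} (h : m ≤ n) (f : Fin n → M)
    (h0 : ∀ j : Fin n, m ≤ j.1 → f j = 0) :
    ∑ j : Fin m, f (Fin.castLE h j) = ∑ j : Fin n, f j := by
  have h1 : ∑ j : Fin m, f (Fin.castLE h j) = ∑ j ∈ Finset.univ.map (Fin.castLEEmb h), f j := by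
    rw [Finset.sum_map]; rfl
  rw [h1]
  apply Finset.sum_subset (Finset.subset_univ _)
  intro j _ hj
  apply h0
  by_contra hlt
  push_neg at hlt
  exact hj (Finset.mem_map.mpr ⟨⟨j.1, hlt⟩, Finset.mem_univ _, by ext; rfl⟩)

lemma prod_castLE' {M : Type*} [CommMonoid M] {n m : ℕ} (h : m ≤ n) (f : Fin n → M)
    (h0 : ∀ j : Fin n, m ≤ j.1 → f j = 1) :
    ∏ j : Fin m, f (Fin.castLE h j) = ∏ j : Fin n, f j := by
  have h1 : ∏ j : Fin m, f (Fin.castLE h j) = ∏ j ∈ Finset.univ.map (Fin.castLEEmb h), f j := by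
    rw [Finset.prod_map]; rfl
  rw [h1]
  apply Finset.prod_subset (Finset.subset_univ _)
  intro j _ hj
  apply h0
  by_contra hlt
  push_neg at hlt
  exact hj (Finset.mem_map.mpr ⟨⟨j.1, hlt⟩, Finset.mem_univ _, by ext; rfl⟩)


/-- `Z_{n,k}(x)` with indeterminates indexed by part sizes `1,...,n`
(only the first `n-k+1` can appear with nonzero exponent). -/
noncomputable def Zhyp (n k : ℕ) (x : ℕ → ℝ) : ℝ :=
  ∑ s ∈ (Finset.Iic (fun _ => n : Fin n → ℕ)).filter
      (fun s => (∑ i, (i.1 + 1) * s i) = n ∧ (∑ i, s i) = k),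
    ∏ i, x (i.1 + 1) ^ s i / (Nat.factorial (s i) : ℝ)

/-- the Euler derivative satisfies `θ_i Z_{n,k} = x_i Z_{n-i,k-1}`
for `i ∈ [n-k+1]` (with `Z_{m,j} = 0` when the support is empty, which holds by
definition of `Zhyp`). -/
theorem euler_derivative_Z (n k : ℕ) (hk : 1 ≤ k) (hkn : k ≤ n)
    (x : ℕ → ℝ) (i : ℕ) (hi1 : 1 ≤ i) (hi2 : i ≤ n - k + 1) :
    x i * deriv (fun t => Zhyp n k (Function.update x i t)) (x i)
      = x i * Zhyp (n - i) (k - 1) x := by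
  have hin : i ≤ n := by omega
  have hni : n - i ≤ n := Nat.sub_le _ _
  set ι : Fin n := ⟨i - 1, by omega⟩ with hιdef
  have hι1 : ι.1 + 1 = i := by simp [hιdef]; omega
  have key : ∀ (t : ℝ) (j : Fin n), Function.update x i t (j.1 + 1)
      = if j = ι then t else x (j.1 + 1) := by
    intro t j
    rcases eq_or_ne j ι with rfl | hj
    · rw [hι1, Function.update_self, if_pos rfl]
    · rw [Function.update_apply, if_neg, if_neg hj]
      intro hji
      exact hj (Fin.ext (by omega))
  set A := (Finset.Iic (fun _ => n : Fin n → ℕ)).filter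
      (fun s => (∑ i, (i.1 + 1) * s i) = n ∧ (∑ i, s i) = k) with hA
  have hderiv : HasDerivAt (fun t => Zhyp n k (Function.update x i t))
      (∑ s ∈ A, (↑(s ι) * x i ^ (s ι - 1) / (Nat.factorial (s ι) : ℝ)) *
        ∏ j ∈ Finset.univ.erase ι, x (j.1 + 1) ^ s j / (Nat.factorial (s j) : ℝ)) (x i) := by
    have heq : (fun t => Zhyp n k (Function.update x i t))
        = fun t => ∑ s ∈ A, (t ^ s ι / (Nat.factorial (s ι) : ℝ)) *
          ∏ j ∈ Finset.univ.erase ι, x (j.1 + 1) ^ s j / (Nat.factorial (s j) : ℝ) := by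
      funext t
      rw [Zhyp]
      refine Finset.sum_congr rfl fun s _ => ?_
      rw [← Finset.mul_prod_erase Finset.univ _ (Finset.mem_univ ι)]
      congr 1
      · rw [key t ι, if_pos rfl]
      · refine Finset.prod_congr rfl fun j hj => ?_
        rw [key t j, if_neg (Finset.ne_of_mem_erase hj)]
    rw [heq]
    apply HasDerivAt.fun_sum
    intro s _
    exact ((hasDerivAt_pow (s ι) (x i)).div_const _).mul_const _
  rw [hderiv.deriv, Zhyp, Finset.mul_sum, Finset.mul_sum]
  rw [← Finset.sum_filter_of_ne (p := fun s => s ι ≠ 0)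
    (fun s _ hf => by
      intro h0
      apply hf
      rw [h0]
      simp)]
  -- key vanishing fact
  have hd0 : ∀ s : Fin n → ℕ, (∑ j : Fin n, (j.1 + 1) * s j) = n → s ι ≠ 0 →
      ∀ j : Fin n, n - i ≤ j.1 → s j - (if j = ι then 1 else 0) = 0 := by
    intro s hs1 hsι j hj
    have hιv : ι.1 = i - 1 := rfl
    by_cases hje : j = ι
    · rw [if_pos hje]
      have hjv : j.1 = i - 1 := by rw [hje]
      have hsj : s j = s ι := by rw [hje]
      have h1 : (j.1 + 1) * s j ≤ n :=
        le_of_le_of_eq (Finset.single_le_sum (f := fun l : Fin n => (l.1 + 1) * s l)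
          (fun _ _ => Nat.zero_le _) (Finset.mem_univ j)) hs1
      by_contra hc
      have h2 : 2 ≤ s j := by omega
      have h3 : (j.1 + 1) * 2 ≤ (j.1 + 1) * s j := Nat.mul_le_mul_left _ h2
      omega
    · rw [if_neg hje]
      by_contra hc
      have h2 : 1 ≤ s j := by omega
      have hpair : (j.1 + 1) * s j + (ι.1 + 1) * s ι ≤ n := by
        refine le_of_le_of_eq ?_ hs1
        refine le_trans (le_of_eq (Finset.sum_pair (f := fun l : Fin n => (l.1 + 1) * s l) hje).symm) ?_
        exact Finset.sum_le_sum_of_subset (Finset.subset_univ _)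
      have h3 : (j.1 + 1) * 1 ≤ (j.1 + 1) * s j := Nat.mul_le_mul_left _ h2
      have h4 : (ι.1 + 1) * 1 ≤ (ι.1 + 1) * s ι := Nat.mul_le_mul_left _ (by omega)
      omega
  refine Finset.sum_bij'
    (fun s _ => (fun j : Fin (n - i) =>
      s (Fin.castLE hni j) - if Fin.castLE hni j = ι then 1 else 0))
    (fun s' _ => (fun j : Fin n =>
      (if h : j.1 < n - i then s' ⟨j.1, h⟩ else 0) + (if j = ι then 1 else 0)))
    ?_ ?_ ?_ ?_ ?_
  · -- maps into B
    intro s hs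
    rw [Finset.mem_filter] at hs
    obtain ⟨hsA, hsι⟩ := hs
    rw [hA, Finset.mem_filter, Finset.mem_Iic] at hsA
    obtain ⟨-, hs1, hs2⟩ := hsA
    have hsplit : ∀ j : Fin n, (j.1 + 1) * s j
        = (j.1 + 1) * (s j - if j = ι then 1 else 0) + (if j = ι then j.1 + 1 else 0) := by
      intro j
      by_cases hje : j = ι
      · rw [if_pos hje, if_pos hje]
        have hsj : s j = s ι := by rw [hje]
        have hone : s j = (s j - 1) + 1 := by omega
        calc (j.1 + 1) * s j = (j.1 + 1) * ((s j - 1) + 1) := by rw [← hone]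
          _ = (j.1 + 1) * (s j - 1) + (j.1 + 1) := by ring
      · simp [hje]

    have hds1 : ∑ j : Fin n, (j.1 + 1) * (s j - if j = ι then 1 else 0) = n - i := by
      have hsum : n = (∑ j : Fin n, (j.1 + 1) * (s j - if j = ι then 1 else 0))
          + ∑ j : Fin n, (if j = ι then j.1 + 1 else 0) := by
        rw [← Finset.sum_add_distrib]
        exact hs1.symm.trans (Finset.sum_congr rfl fun j _ => hsplit j)
      rw [Finset.sum_ite_eq' Finset.univ ι (fun j : Fin n => j.1 + 1)] at hsum
      simp at hsum
      omega
    have hds2 : ∑ j : Fin n, (s j - if j = ι then 1 else 0) = k - 1 := by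
      have hsum : k = (∑ j : Fin n, (s j - if j = ι then 1 else 0))
          + ∑ j : Fin n, (if j = ι then 1 else 0) := by
        rw [← Finset.sum_add_distrib]
        refine hs2.symm.trans (Finset.sum_congr rfl fun j _ => ?_)
        by_cases hje : j = ι
        · rw [if_pos hje]
          have hsj : s j = s ι := by rw [hje]
          omega
        · simp [hje]
      rw [Finset.sum_ite_eq' Finset.univ ι (fun _ : Fin n => 1)] at hsum
      simp at hsum
      omega
    have hc1 : ∑ j : Fin (n - i), (j.1 + 1) *
        (s (Fin.castLE hni j) - if Fin.castLE hni j = ι then 1 else 0) = n - i := by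
      have := sum_castLE' hni
        (fun j : Fin n => (j.1 + 1) * (s j - if j = ι then 1 else 0))
        (fun j hj => by
          show (j.1 + 1) * (s j - if j = ι then 1 else 0) = 0
          rw [hd0 s hs1 hsι j hj, Nat.mul_zero])
      exact this.trans hds1
    have hc2 : ∑ j : Fin (n - i),
        (s (Fin.castLE hni j) - if Fin.castLE hni j = ι then 1 else 0) = k - 1 := by
      have := sum_castLE' hni
        (fun j : Fin n => (s j - if j = ι then 1 else 0))
        (fun j hj => hd0 s hs1 hsι j hj)
      exact this.trans hds2
    rw [Finset.mem_filter, Finset.mem_Iic]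
    refine ⟨?_, hc1, hc2⟩
    intro j
    have h1 := Finset.single_le_sum
      (f := fun j : Fin (n - i) => (j.1 + 1) *
        (s (Fin.castLE hni j) - if Fin.castLE hni j = ι then 1 else 0))
      (fun _ _ => Nat.zero_le _) (Finset.mem_univ j)
    rw [hc1] at h1
    exact le_trans (Nat.le_mul_of_pos_left _ (Nat.succ_pos _)) h1
  · -- maps back into A.filter
    intro s' hs'
    rw [Finset.mem_filter, Finset.mem_Iic] at hs'
    obtain ⟨-, hb1, hb2⟩ := hs'
    have he1 : ∑ j : Fin n, (j.1 + 1) * (if h : j.1 < n - i then s' ⟨j.1, h⟩ else 0) = n - i := by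
      rw [← sum_castLE' hni
        (fun j : Fin n => (j.1 + 1) * (if h : j.1 < n - i then s' ⟨j.1, h⟩ else 0))
        (fun j hj => by
          show (j.1 + 1) * (if h : j.1 < n - i then s' ⟨j.1, h⟩ else 0) = 0
          rw [dif_neg (by omega), Nat.mul_zero])]
      refine (Finset.sum_congr rfl fun j _ => ?_).trans hb1
      show (j.1 + 1) * (if h : j.1 < n - i then s' ⟨j.1, h⟩ else 0) = (j.1 + 1) * s' j
      rw [dif_pos j.isLt]
    have he2 : ∑ j : Fin n, (if h : j.1 < n - i then s' ⟨j.1, h⟩ else 0) = k - 1 := by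
      rw [← sum_castLE' hni
        (fun j : Fin n => (if h : j.1 < n - i then s' ⟨j.1, h⟩ else 0))
        (fun j hj => by
          show (if h : j.1 < n - i then s' ⟨j.1, h⟩ else 0) = 0
          rw [dif_neg (by omega)])]
      refine (Finset.sum_congr rfl fun j _ => ?_).trans hb2
      show (if h : j.1 < n - i then s' ⟨j.1, h⟩ else 0) = s' j
      rw [dif_pos j.isLt]
    have hf1 : ∑ j : Fin n, (j.1 + 1) *
        ((if h : j.1 < n - i then s' ⟨j.1, h⟩ else 0) + (if j = ι then 1 else 0)) = n := by
      have : ∀ j : Fin n, (j.1 + 1) *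
          ((if h : j.1 < n - i then s' ⟨j.1, h⟩ else 0) + (if j = ι then 1 else 0))
          = (j.1 + 1) * (if h : j.1 < n - i then s' ⟨j.1, h⟩ else 0)
            + (if j = ι then j.1 + 1 else 0) := by
        intro j
        rw [Nat.mul_add]
        congr 1
        by_cases hje : j = ι
        · simp [hje]
        · simp [hje]
      have hstep : ∑ j : Fin n, (j.1 + 1) *
          ((if h : j.1 < n - i then s' ⟨j.1, h⟩ else 0) + (if j = ι then 1 else 0))
          = (∑ j : Fin n, (j.1 + 1) * (if h : j.1 < n - i then s' ⟨j.1, h⟩ else 0))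
            + ∑ j : Fin n, (if j = ι then j.1 + 1 else 0) := by
        rw [← Finset.sum_add_distrib]
        exact Finset.sum_congr rfl fun j _ => this j
      rw [hstep, he1, Finset.sum_ite_eq' Finset.univ ι (fun j : Fin n => j.1 + 1)]
      simp
      omega
    have hf2 : ∑ j : Fin n,
        ((if h : j.1 < n - i then s' ⟨j.1, h⟩ else 0) + (if j = ι then 1 else 0)) = k := by
      rw [Finset.sum_add_distrib, he2,
        Finset.sum_ite_eq' Finset.univ ι (fun _ : Fin n => 1)]
      simp
      omega
    rw [Finset.mem_filter, hA, Finset.mem_filter, Finset.mem_Iic]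
    refine ⟨⟨?_, hf1, hf2⟩, ?_⟩
    · intro j
      have h1 := Finset.single_le_sum
        (f := fun j : Fin n => (j.1 + 1) *
          ((if h : j.1 < n - i then s' ⟨j.1, h⟩ else 0) + (if j = ι then 1 else 0)))
        (fun _ _ => Nat.zero_le _) (Finset.mem_univ j)
      rw [hf1] at h1
      exact le_trans (Nat.le_mul_of_pos_left _ (Nat.succ_pos _)) h1
    · show (if h : ι.1 < n - i then s' ⟨ι.1, h⟩ else 0) + (if ι = ι then 1 else 0) ≠ 0
      simp
  · -- left inverse
    intro s hs
    rw [Finset.mem_filter] at hs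
    obtain ⟨hsA, hsι⟩ := hs
    rw [hA, Finset.mem_filter, Finset.mem_Iic] at hsA
    obtain ⟨-, hs1, -⟩ := hsA
    funext j
    by_cases h : j.1 < n - i
    · show (if h' : j.1 < n - i then
          (s (Fin.castLE hni ⟨j.1, h'⟩) - if Fin.castLE hni ⟨j.1, h'⟩ = ι then 1 else 0)
          else 0) + (if j = ι then 1 else 0) = s j
      rw [dif_pos h]
      show (s j - if j = ι then 1 else 0) + (if j = ι then 1 else 0) = s j
      by_cases hje : j = ι
      · have hsj : s j = s ι := by rw [hje]
        simp only [if_pos hje]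
        omega
      · simp only [if_neg hje]; omega
    · have h0 := hd0 s hs1 hsι j (by omega)
      show (if h' : j.1 < n - i then
          (s (Fin.castLE hni ⟨j.1, h'⟩) - if Fin.castLE hni ⟨j.1, h'⟩ = ι then 1 else 0)
          else 0) + (if j = ι then 1 else 0) = s j
      rw [dif_neg h]
      show (0 : ℕ) + (if j = ι then 1 else 0) = s j
      by_cases hje : j = ι
      · have hsj : s j = s ι := by rw [hje]
        simp only [if_pos hje] at h0 ⊢
        omega
      · simp only [if_neg hje] at h0 ⊢; omega
  · -- right inverse
    intro s' hs'
    funext j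
    show (if h : (Fin.castLE hni j).1 < n - i then s' ⟨(Fin.castLE hni j).1, h⟩ else 0)
        + (if Fin.castLE hni j = ι then 1 else 0)
        - (if Fin.castLE hni j = ι then 1 else 0) = s' j
    rw [dif_pos (show (Fin.castLE hni j).1 < n - i from j.isLt)]
    show s' j + (if Fin.castLE hni j = ι then 1 else 0)
      - (if Fin.castLE hni j = ι then 1 else 0) = s' j
    omega
  · -- term equality
    intro s hs
    rw [Finset.mem_filter] at hs
    obtain ⟨hsA, hsι⟩ := hs
    rw [hA, Finset.mem_filter, Finset.mem_Iic] at hsA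
    obtain ⟨-, hs1, -⟩ := hsA
    have hprod := prod_castLE' hni
      (fun j : Fin n => x (j.1 + 1) ^ (s j - if j = ι then 1 else 0)
        / ((Nat.factorial (s j - if j = ι then 1 else 0)) : ℝ))
      (fun j hj => by
        show x (j.1 + 1) ^ (s j - if j = ι then 1 else 0)
          / ((Nat.factorial (s j - if j = ι then 1 else 0)) : ℝ) = 1
        rw [hd0 s hs1 hsι j hj]
        simp)
    rw [← Finset.mul_prod_erase Finset.univ _ (Finset.mem_univ ι)] at hprod
    show x i * (↑(s ι) * x i ^ (s ι - 1) / ↑(Nat.factorial (s ι)) *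
        ∏ j ∈ Finset.univ.erase ι, x (j.1 + 1) ^ s j / ↑(Nat.factorial (s j)))
      = x i * ∏ j : Fin (n - i),
        x ((Fin.castLE hni j).1 + 1) ^ (s (Fin.castLE hni j) - if Fin.castLE hni j = ι then 1 else 0)
          / ↑(Nat.factorial (s (Fin.castLE hni j) - if Fin.castLE hni j = ι then 1 else 0))
    rw [show (∏ j : Fin (n - i),
        x ((Fin.castLE hni j).1 + 1) ^ (s (Fin.castLE hni j) - if Fin.castLE hni j = ι then 1 else 0)
          / ↑(Nat.factorial (s (Fin.castLE hni j) - if Fin.castLE hni j = ι then 1 else 0)))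
      = (x (ι.1 + 1) ^ (s ι - if ι = ι then 1 else 0)
          / ↑(Nat.factorial (s ι - if ι = ι then 1 else 0)))
        * ∏ j ∈ Finset.univ.erase ι, x (j.1 + 1) ^ (s j - if j = ι then 1 else 0)
          / ↑(Nat.factorial (s j - if j = ι then 1 else 0)) from hprod]
    rw [if_pos rfl, hι1]
    rw [show (∏ j ∈ Finset.univ.erase ι, x (j.1 + 1) ^ (s j - if j = ι then 1 else 0)
          / ↑(Nat.factorial (s j - if j = ι then 1 else 0)))
      = ∏ j ∈ Finset.univ.erase ι, x (j.1 + 1) ^ s j / ↑(Nat.factorial (s j)) from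
      Finset.prod_congr rfl fun j hj => by
        rw [if_neg (Finset.ne_of_mem_erase hj), Nat.sub_zero]]
    obtain ⟨m, hm⟩ := Nat.exists_eq_succ_of_ne_zero hsι
    rw [hm]
    simp only [Nat.succ_sub_one]
    have hm0 : ((Nat.factorial m : ℝ)) ≠ 0 := Nat.cast_ne_zero.mpr (Nat.factorial_ne_zero m)
    rw [Nat.factorial_succ, Nat.cast_mul, Nat.cast_succ]
    have hm1 : ((m : ℝ) + 1) ≠ 0 := by positivity
    field_simp
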